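/- Let ξ be a principal element of a Levi subalgebra l of a reductive Lie algebra g (i.e., the centralizer of the semisimple part ξ_s is contained in l), and let p = l ⊕ p_u be a parabolic subalgebra with Levi part l and nilradical p_u. Then z_g(ξ) ∩ p_u = {0}, and consequently the map ad(ξ) : p_u → p_u is invertible. -/

import Mathlib

/-- In a family of eigenspaces, a finite sum of components equaling zero forces each
component to vanish. -/
lemma eigen_sum_eq_zero_aux {K V : Type*} [Field K] [AddCommGroup V] [Module K V]
    (f : Module.End K V) (s : Finset K) (v : K → V)
    (hv : ∀ μ ∈ s, v μ ∈ Module.End.eigenspace f μ)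
    (hsum : ∑ μ ∈ s, v μ = 0) : ∀ μ ∈ s, v μ = 0 := by
  classical
  intro μ hμ
  have hdisj : Disjoint (Module.End.eigenspace f μ)
      (⨆ ν ∈ {ν : K | ν ≠ μ}, Module.End.eigenspace f ν) :=
    f.eigenspaces_iSupIndep.disjoint_biSup (by simp)
  have hvmu : v μ = -∑ ν ∈ s.erase μ, v ν := by
    have h := Finset.add_sum_erase s v hμ
    rw [hsum] at h
    exact eq_neg_of_add_eq_zero_left h
  have h1 : v μ ∈ ⨆ ν ∈ {ν : K | ν ≠ μ}, Module.End.eigenspace f ν := by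
    rw [hvmu]
    refine Submodule.neg_mem _ (Submodule.sum_mem _ fun ν hν => ?_)
    have hne : ν ≠ μ := Finset.ne_of_mem_erase hν
    exact Submodule.mem_iSup_of_mem ν (Submodule.mem_iSup_of_mem hne
      (hv ν (Finset.mem_of_mem_erase hν)))
  exact (Submodule.mem_bot K).mp (hdisj.le_bot ⟨hv μ hμ, h1⟩)

/-- If `f` is diagonalizable, `n` is nilpotent, and `f`, `n` commute, then
the kernel of `f + n` is contained in the kernel of `f`. -/
lemma ker_add_nilpotent_le_ker_aux {K V : Type*} [Field K] [AddCommGroup V] [Module K V]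
    (f n : Module.End K V) (hc : Commute f n) (hn : IsNilpotent n)
    (hss : (⨆ μ : K, Module.End.eigenspace f μ) = ⊤)
    (u : V) (hu : f u + n u = 0) : f u = 0 := by
  obtain ⟨k, hk⟩ := hn
  have humem : u ∈ ⨆ μ : K, Module.End.eigenspace f μ := hss ▸ Submodule.mem_top
  rw [Submodule.mem_iSup_iff_exists_finsupp] at humem
  obtain ⟨c, hc1, hc2⟩ := humem
  have hninv : ∀ μ : K, ∀ x ∈ Module.End.eigenspace f μ,
      n x ∈ Module.End.eigenspace f μ := by
    intro μ x hx
    rw [Module.End.mem_eigenspace_iff] at hx ⊢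
    calc f (n x) = n (f x) := by
          rw [← Module.End.mul_apply, ← Module.End.mul_apply, hc.eq]
    _ = μ • n x := by rw [hx, map_smul]
  have hAsum : ∑ μ ∈ c.support, (f + n) (c μ) = 0 := by
    have h0 : (f + n) u = 0 := hu
    rw [← h0, ← hc2, Finsupp.sum, map_sum]
  have hAzero : ∀ μ ∈ c.support, (f + n) (c μ) = 0 := by
    refine eigen_sum_eq_zero_aux f c.support (fun μ => (f + n) (c μ)) (fun μ _ => ?_) hAsum
    have h1 : f (c μ) ∈ Module.End.eigenspace f μ := by
      rw [Module.End.mem_eigenspace_iff.mp (hc1 μ)]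
      exact Submodule.smul_mem _ _ (hc1 μ)
    simpa using Submodule.add_mem _ h1 (hninv μ _ (hc1 μ))
  -- each component with nonzero eigenvalue vanishes
  have hczero : ∀ μ : K, μ ≠ 0 → c μ = 0 := by
    intro μ hμ0
    by_cases hsup : μ ∈ c.support
    · have hfc : f (c μ) = μ • c μ := Module.End.mem_eigenspace_iff.mp (hc1 μ)
      have hnc : n (c μ) = (-μ) • c μ := by
        have h := hAzero μ hsup
        simp only [LinearMap.add_apply] at h
        rw [hfc] at h
        rw [neg_smul]
        exact eq_neg_of_add_eq_zero_right h
      have hpow : ∀ j : ℕ, (n ^ j) (c μ) = ((-μ) ^ j) • c μ := by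
        intro j
        induction j with
        | zero => simp
        | succ j ih =>
          rw [pow_succ, Module.End.mul_apply, hnc, map_smul, ih, smul_smul, ← pow_succ']
      have h0 : ((-μ) ^ k) • c μ = 0 := by rw [← hpow, hk]; simp
      rcases smul_eq_zero.mp h0 with h | h
      · exact absurd h (pow_ne_zero k (neg_ne_zero.mpr hμ0))
      · exact h
    · exact Finsupp.notMem_support_iff.mp hsup
  rw [← hc2, Finsupp.sum, map_sum]
  refine Finset.sum_eq_zero fun μ _ => ?_
  rcases eq_or_ne μ 0 with rfl | hμ0
  · rw [Module.End.mem_eigenspace_iff.mp (hc1 0), zero_smul]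
  · rw [hczero μ hμ0, map_zero]

/-- **`ad(ξ)` is invertible on the nilradical for a principal element.**  Let `g` be a
finite-dimensional Lie algebra over an algebraically closed field of characteristic zero,
`l ≤ p` a Levi subalgebra of a parabolic subalgebra `p = l ⊕ p_u` with nilradical `p_u`,
and `ξ ∈ l` a principal element:  writing `ξ = ξ_s + ξ_n` for the Jordan decomposition
(`ad ξ_s` diagonalizable, `ad ξ_n` nilpotent, `⁅ξ_s, ξ_n⁆ = 0`), the centralizer
`z_g(ξ_s)` is contained in `l`.  Then `z_g(ξ) ∩ p_u = {0}`, and consequently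
`ad ξ : p_u → p_u` is invertible. -/
theorem ad_principal_element_invertible_on_nilradical
    {K g : Type*} [Field K] [IsAlgClosed K] [CharZero K]
    [LieRing g] [LieAlgebra K g] [Module.Finite K g]
    (l p pu : LieSubalgebra K g)
    (hlp : l ≤ p) (hpup : pu ≤ p)
    (hdecomp : ∀ x ∈ p, ∃ y ∈ l, ∃ u ∈ pu, x = y + u)
    (hint : l ⊓ pu = ⊥)
    (hideal : ∀ x ∈ p, ∀ u ∈ pu, ⁅x, u⁆ ∈ pu)
    (ξ ξs ξn : g) (hξl : ξ ∈ l) (hjordan : ξ = ξs + ξn)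
    (hcomm : ⁅ξs, ξn⁆ = 0)
    (hss : (⨆ μ : K, Module.End.eigenspace (LieAlgebra.ad K g ξs) μ) = ⊤)
    (hnil : IsNilpotent (LieAlgebra.ad K g ξn))
    (hprincipal : ∀ x : g, ⁅ξs, x⁆ = 0 → x ∈ l) :
    (∀ u ∈ pu, ⁅ξ, u⁆ = 0 → u = 0) ∧ (∀ w ∈ pu, ∃ u ∈ pu, ⁅ξ, u⁆ = w) := by
  set f := LieAlgebra.ad K g ξs with hf
  set n := LieAlgebra.ad K g ξn with hn
  have hc : Commute f n := by
    letI : LieRing (Module.End K g) := LieRing.ofAssociativeRing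
    have h : ⁅f, n⁆ = (0 : Module.End K g) := by
      rw [hf, hn, ← LieHom.map_lie, hcomm, map_zero]
    rw [Ring.lie_def] at h
    exact sub_eq_zero.mp h
  -- injectivity part
  have hinj : ∀ u ∈ pu, ⁅ξ, u⁆ = 0 → u = 0 := by
    intro u hu hlie
    have hsum : f u + n u = 0 := by
      have : f u + n u = ⁅ξ, u⁆ := by
        rw [hjordan]; simp [hf, hn, LieAlgebra.ad_apply, add_lie]
      rw [this, hlie]
    have hfu : f u = 0 := ker_add_nilpotent_le_ker_aux f n hc hnil hss u hsum
    have hul : u ∈ l := hprincipal u (by simpa [hf, LieAlgebra.ad_apply] using hfu)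
    have : u ∈ l ⊓ pu := ⟨hul, hu⟩
    rw [hint] at this
    exact this
  refine ⟨hinj, ?_⟩
  -- surjectivity via finite dimensionality
  have hmaps : ∀ x ∈ pu.toSubmodule, (LieAlgebra.ad K g ξ) x ∈ pu.toSubmodule := by
    intro x hx
    simpa [LieAlgebra.ad_apply] using hideal ξ (hlp hξl) x hx
  set T : pu.toSubmodule →ₗ[K] pu.toSubmodule :=
    (LieAlgebra.ad K g ξ : Module.End K g).restrict hmaps with hT
  have hTinj : Function.Injective T := by
    intro x y hxy
    have hsub : T (x - y) = 0 := by rw [map_sub, hxy, sub_self]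
    have : ((x - y : pu.toSubmodule) : g) = 0 := by
      have h0 : ⁅ξ, ((x - y : pu.toSubmodule) : g)⁆ = 0 := by
        have := congrArg (Subtype.val) hsub
        simpa [hT, LinearMap.restrict_apply, LieAlgebra.ad_apply] using this
      exact hinj _ (x - y).2 h0
    exact sub_eq_zero.mp (by exact_mod_cast this)
  have hTsurj : Function.Surjective T :=
    (LinearMap.injective_iff_surjective).mp hTinj
  intro w hw
  obtain ⟨x, hx⟩ := hTsurj ⟨w, hw⟩
  refine ⟨x, x.2, ?_⟩
  have := congrArg (Subtype.val) hx
  simpa [hT, LinearMap.restrict_apply, LieAlgebra.ad_apply] using this
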